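/- The limit as m → ∞ (with n = 4m+1) of 4·(∑_{k=1}^{(n-1)/4} (cos((2k-1)π/(2n-2)) − cos(kπ/(n+1))) + ∑_{k=(n+3)/4}^{(n-1)/2} (cos(kπ/(n+1)) − cos((2k-1)π/(2n-2)))) equals (8 − 8√2 + 2π)/π. -/

import Mathlib

open Real Filter Finset Topology

noncomputable def aa (m : ℕ) : ℝ := Real.pi / (8 * m)
noncomputable def cc (m : ℕ) : ℝ := Real.pi / (8 * m + 4)
noncomputable def dd (m : ℕ) : ℝ := (cc m - aa m) / 2
noncomputable def ee (m : ℕ) : ℝ := (cc m + aa m) / 2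
noncomputable def FF (m : ℕ) : ℝ :=
  2 * (Real.sqrt 2 - 1) * (-4 / Real.pi) * (Real.sin (dd m) / dd m) * Real.cos (ee m) *
      (aa m / Real.sin (aa m)) * (cc m / Real.sin (cc m)) -
    2 * (Real.sin (cc m / 2) / Real.cos (cc m / 2)) + 2


lemma tele1 (θ : ℝ) : ∀ N : ℕ, ∑ k ∈ Finset.Ioc 0 N,
    (2 * Real.sin θ * Real.cos ((2 * (k : ℝ) - 1) * θ)) = Real.sin (2 * N * θ) := by
  intro N
  induction N with
  | zero => simp
  | succ N ih =>
    rw [Finset.sum_Ioc_succ_top (Nat.zero_le _), ih]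
    push_cast
    rw [show 2 * ((N : ℝ) + 1) * θ = (2 * N + 1) * θ + θ by ring,
      show 2 * (N : ℝ) * θ = (2 * N + 1) * θ - θ by ring, Real.sin_add, Real.sin_sub]
    ring

lemma tele2 (θ : ℝ) : ∀ N : ℕ, ∑ k ∈ Finset.Ioc 0 N,
    (2 * Real.sin (θ / 2) * Real.cos ((k : ℝ) * θ)) =
      Real.sin (((N : ℝ) + 1 / 2) * θ) - Real.sin (θ / 2) := by
  intro N
  induction N with
  | zero => rw [show (((0:ℕ):ℝ) + 1/2)*θ = θ/2 by push_cast; ring]; simp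
  | succ N ih =>
    rw [Finset.sum_Ioc_succ_top (Nat.zero_le _), ih]
    push_cast
    rw [show ((N : ℝ) + 1 + 1 / 2) * θ = ((N : ℝ) + 1) * θ + θ / 2 by ring,
      show ((N : ℝ) + 1 / 2) * θ = ((N : ℝ) + 1) * θ - θ / 2 by ring,
      Real.sin_add, Real.sin_sub]
    ring

lemma sin_div_self_tendsto : Tendsto (fun x : ℝ => Real.sin x / x) (𝓝[≠] (0:ℝ)) (𝓝 1) := by
  have h := Real.hasDerivAt_sin 0
  rw [Real.cos_zero] at h
  have := hasDerivAt_iff_tendsto_slope.mp h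
  refine this.congr fun x => ?_
  simp [slope_fun_def, Real.sin_zero, div_eq_inv_mul]

lemma seq_sin_div {u : ℕ → ℝ} (hu : Tendsto u atTop (𝓝 0)) (hne : ∀ᶠ m in atTop, u m ≠ 0) :
    Tendsto (fun m => Real.sin (u m) / u m) atTop (𝓝 1) :=
  sin_div_self_tendsto.comp (tendsto_nhdsWithin_iff.mpr ⟨hu, hne⟩)

lemma aa_pos {m : ℕ} (hm : 1 ≤ m) : 0 < aa m := by
  have : (0:ℝ) < m := by exact_mod_cast hm
  exact div_pos Real.pi_pos (by linarith)

lemma cc_pos (m : ℕ) : 0 < cc m := by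
  have : (0:ℝ) ≤ m := Nat.cast_nonneg m
  exact div_pos Real.pi_pos (by linarith)

lemma cc_lt_aa {m : ℕ} (hm : 1 ≤ m) : cc m < aa m := by
  have h : (0:ℝ) < m := by exact_mod_cast hm
  exact div_lt_div_of_pos_left Real.pi_pos (by linarith) (by linarith)

lemma dd_neg {m : ℕ} (hm : 1 ≤ m) : dd m < 0 := by
  have := cc_lt_aa hm; unfold dd; linarith

lemma FF_lim : Tendsto FF atTop (𝓝 ((8 - 8 * Real.sqrt 2 + 2 * Real.pi) / Real.pi)) := by
  have h8 : Tendsto (fun m : ℕ => (8:ℝ) * m) atTop atTop :=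
    (tendsto_natCast_atTop_atTop (R := ℝ)).const_mul_atTop (by norm_num)
  have h84 : Tendsto (fun m : ℕ => (8:ℝ) * m + 4) atTop atTop :=
    tendsto_atTop_add_const_right _ 4 h8
  have ha : Tendsto aa atTop (𝓝 0) := by
    have h2 := h8.inv_tendsto_atTop.const_mul Real.pi
    rw [mul_zero] at h2
    exact h2.congr fun m => by simp [aa, div_eq_mul_inv]
  have hc : Tendsto cc atTop (𝓝 0) := by
    have h2 := h84.inv_tendsto_atTop.const_mul Real.pi
    rw [mul_zero] at h2
    exact h2.congr fun m => by simp [cc, div_eq_mul_inv]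
  have hd : Tendsto dd atTop (𝓝 0) := by
    have := (hc.sub ha).div_const 2
    exact (by simpa using this : Tendsto (fun a => (cc a - aa a) / 2) atTop (𝓝 0))
  have he : Tendsto ee atTop (𝓝 0) := by
    have := (hc.add ha).div_const 2
    exact (by simpa using this : Tendsto (fun a => (cc a + aa a) / 2) atTop (𝓝 0))
  have hane : ∀ᶠ m in atTop, aa m ≠ 0 :=
    eventually_atTop.2 ⟨1, fun m hm => (aa_pos hm).ne'⟩
  have hcne : ∀ᶠ m : ℕ in atTop, cc m ≠ 0 :=
    eventually_atTop.2 ⟨1, fun m _ => (cc_pos m).ne'⟩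
  have hdne : ∀ᶠ m in atTop, dd m ≠ 0 :=
    eventually_atTop.2 ⟨1, fun m hm => (dd_neg hm).ne⟩
  have hsd := seq_sin_div hd hdne
  have hsa : Tendsto (fun m => aa m / Real.sin (aa m)) atTop (𝓝 1) := by
    have := (seq_sin_div ha hane).inv₀ one_ne_zero
    simpa [inv_div] using this
  have hsc : Tendsto (fun m => cc m / Real.sin (cc m)) atTop (𝓝 1) := by
    have := (seq_sin_div hc hcne).inv₀ one_ne_zero
    simpa [inv_div] using this
  have hcose : Tendsto (fun m => Real.cos (ee m)) atTop (𝓝 1) := by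
    have := (Real.continuous_cos.tendsto 0).comp he
    simpa [Function.comp_def] using this
  have htan : Tendsto (fun m => Real.sin (cc m / 2) / Real.cos (cc m / 2)) atTop (𝓝 0) := by
    have hc2 : Tendsto (fun m : ℕ => cc m / 2) atTop (𝓝 0) := by
      simpa using hc.div_const 2
    have hs : Tendsto (fun m => Real.sin (cc m / 2)) atTop (𝓝 0) := by
      have := (Real.continuous_sin.tendsto 0).comp hc2
      simpa [Function.comp_def] using this
    have hcos : Tendsto (fun m => Real.cos (cc m / 2)) atTop (𝓝 1) := by
      have := (Real.continuous_cos.tendsto 0).comp hc2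
      simpa [Function.comp_def] using this
    simpa [Pi.div_def] using hs.div hcos one_ne_zero
  have main : Tendsto FF atTop
      (𝓝 (2 * (Real.sqrt 2 - 1) * (-4 / Real.pi) * 1 * 1 * 1 * 1 - 2 * 0 + 2)) := by
    exact ((((((tendsto_const_nhds (x := 2 * (Real.sqrt 2 - 1) * (-4 / Real.pi))).mul
      hsd).mul hcose).mul hsa).mul hsc).sub (tendsto_const_nhds.mul htan)).add_const 2
  convert main using 2
  have hpi : Real.pi ≠ 0 := Real.pi_ne_zero
  field_simp
  ring

set_option maxHeartbeats 1000000 in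
lemma FF_eq (m : ℕ) (hm : 1 ≤ m) :
    FF m =
      (4 : ℝ) *
        ((∑ k ∈ Finset.Icc 1 ((4 * m + 1 - 1) / 4),
            (Real.cos ((2 * (k : ℝ) - 1) * Real.pi / (2 * (4 * (m : ℝ) + 1) - 2)) -
              Real.cos ((k : ℝ) * Real.pi / ((4 * (m : ℝ) + 1) + 1)))) +
          ∑ k ∈ Finset.Icc ((4 * m + 1 + 3) / 4) ((4 * m + 1 - 1) / 2),
            (Real.cos ((k : ℝ) * Real.pi / ((4 * (m : ℝ) + 1) + 1)) -
              Real.cos ((2 * (k : ℝ) - 1) * Real.pi / (2 * (4 * (m : ℝ) + 1) - 2)))) := by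
  have hm0 : (0:ℝ) < m := by exact_mod_cast hm
  have hm1 : (1:ℝ) ≤ m := by exact_mod_cast hm
  have hmne : (m:ℝ) ≠ 0 := ne_of_gt hm0
  have h8ne : (8*(m:ℝ)) ≠ 0 := by positivity
  have h84ne : (8*(m:ℝ)+4) ≠ 0 := by positivity
  have e1 : (4 * m + 1 - 1) / 4 = m := by omega
  have e2 : (4 * m + 1 + 3) / 4 = m + 1 := by omega
  have e3 : (4 * m + 1 - 1) / 2 = 2 * m := by omega
  rw [e1, e2, e3]
  have hIcc : Finset.Icc 1 m = Finset.Ioc 0 m := by ext x; simp; omega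
  have hIcc2 : Finset.Icc (m+1) (2*m) = Finset.Ioc m (2*m) := by ext x; simp
  rw [hIcc, hIcc2, Finset.sum_sub_distrib, Finset.sum_sub_distrib]
  set A := Real.pi / (8 * (m:ℝ)) with hA
  set C := Real.pi / (8 * (m:ℝ) + 4) with hC
  have hA0 : 0 < A := div_pos Real.pi_pos (by linarith)
  have hAlt : A < Real.pi := div_lt_self Real.pi_pos (by linarith)
  have hC0 : 0 < C := div_pos Real.pi_pos (by linarith)
  have hClt : C < Real.pi := div_lt_self Real.pi_pos (by linarith)
  have hsA : 0 < Real.sin A := Real.sin_pos_of_pos_of_lt_pi hA0 hAlt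
  have hsC : 0 < Real.sin C := Real.sin_pos_of_pos_of_lt_pi hC0 hClt
  have h2sA : (2 * Real.sin A) ≠ 0 := by positivity
  have h2sC : (2 * Real.sin C) ≠ 0 := by positivity
  have oddsum : ∀ N : ℕ, ∑ k ∈ Finset.Ioc 0 N,
      Real.cos ((2*(k:ℝ)-1)*Real.pi/(2*(4*(m:ℝ)+1)-2)) =
        Real.sin (2*(N:ℝ)*A) / (2*Real.sin A) := by
    intro N
    rw [eq_div_iff h2sA, ← tele1 A N, Finset.sum_mul]
    refine Finset.sum_congr rfl fun k _ => ?_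
    rw [show (2*(4*(m:ℝ)+1)-2) = 8*(m:ℝ) by ring, mul_div_assoc, ← hA]
    ring
  have evensum : ∀ N : ℕ, ∑ k ∈ Finset.Ioc 0 N,
      Real.cos ((k:ℝ)*Real.pi/((4*(m:ℝ)+1)+1)) =
        (Real.sin (((N:ℝ)+1/2)*(2*C)) - Real.sin C) / (2*Real.sin C) := by
    intro N
    have h1 := tele2 (2*C) N
    rw [show (2*C)/2 = C by ring] at h1
    rw [eq_div_iff h2sC, ← h1, Finset.sum_mul]
    refine Finset.sum_congr rfl fun k _ => ?_
    have harg : (k:ℝ)*Real.pi/((4*(m:ℝ)+1)+1) = (k:ℝ)*(2*C) := by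
      rw [hC]; field_simp; ring
    rw [harg]; ring
  have o1 : ∑ k ∈ Finset.Ioc 0 m,
      Real.cos ((2*(k:ℝ)-1)*Real.pi/(2*(4*(m:ℝ)+1)-2)) = (Real.sqrt 2/2) / (2*Real.sin A) := by
    rw [oddsum m, show 2*(m:ℝ)*A = Real.pi/4 by rw [hA]; field_simp; ring,
      Real.sin_pi_div_four]
  have o2 : ∑ k ∈ Finset.Ioc 0 (2*m),
      Real.cos ((2*(k:ℝ)-1)*Real.pi/(2*(4*(m:ℝ)+1)-2)) = 1 / (2*Real.sin A) := by
    rw [oddsum (2*m), show 2*((2*m:ℕ):ℝ)*A = Real.pi/2 by push_cast; rw [hA]; field_simp; ring,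
      Real.sin_pi_div_two]
  have ev1 : ∑ k ∈ Finset.Ioc 0 m,
      Real.cos ((k:ℝ)*Real.pi/((4*(m:ℝ)+1)+1)) =
        (Real.sqrt 2/2 - Real.sin C) / (2*Real.sin C) := by
    rw [evensum m, show ((m:ℝ)+1/2)*(2*C) = Real.pi/4 by rw [hC]; field_simp; ring,
      Real.sin_pi_div_four]
  have ev2 : ∑ k ∈ Finset.Ioc 0 (2*m),
      Real.cos ((k:ℝ)*Real.pi/((4*(m:ℝ)+1)+1)) =
        (Real.cos C - Real.sin C) / (2*Real.sin C) := by
    rw [evensum (2*m), show (((2*m:ℕ):ℝ)+1/2)*(2*C) = Real.pi/2 - C by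
        push_cast; rw [hC]; field_simp; ring,
      Real.sin_pi_div_two_sub]
  have osplit : ∑ k ∈ Finset.Ioc m (2*m),
      Real.cos ((2*(k:ℝ)-1)*Real.pi/(2*(4*(m:ℝ)+1)-2)) =
        1/(2*Real.sin A) - (Real.sqrt 2/2)/(2*Real.sin A) := by
    have h := Finset.sum_Ioc_consecutive
      (fun k : ℕ => Real.cos ((2*(k:ℝ)-1)*Real.pi/(2*(4*(m:ℝ)+1)-2)))
      (Nat.zero_le m) (by omega : m ≤ 2*m)
    rw [o1, o2] at h
    linarith
  have esplit : ∑ k ∈ Finset.Ioc m (2*m),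
      Real.cos ((k:ℝ)*Real.pi/((4*(m:ℝ)+1)+1)) =
        (Real.cos C - Real.sin C)/(2*Real.sin C) -
          (Real.sqrt 2/2 - Real.sin C)/(2*Real.sin C) := by
    have h := Finset.sum_Ioc_consecutive
      (fun k : ℕ => Real.cos ((k:ℝ)*Real.pi/((4*(m:ℝ)+1)+1)))
      (Nat.zero_le m) (by omega : m ≤ 2*m)
    rw [ev1, ev2] at h
    linarith
  rw [o1, ev1, osplit, esplit]
  -- now the FF side
  simp only [FF, dd, ee, aa, cc, ← hA, ← hC]
  have hs2 : 0 < Real.sin (C/2) :=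
    Real.sin_pos_of_pos_of_lt_pi (by linarith) (by linarith [Real.pi_pos])
  have hc2 : 0 < Real.cos (C/2) :=
    Real.cos_pos_of_mem_Ioo ⟨by linarith, by linarith⟩
  have R1 : Real.sin C - Real.sin A = 2 * Real.sin ((C-A)/2) * Real.cos ((C+A)/2) :=
    Real.sin_sub_sin C A
  have R2 := Real.sin_two_mul (C/2)
  rw [show 2*(C/2) = C by ring] at R2
  have R3 := Real.cos_two_mul (C/2)
  rw [show 2*(C/2) = C by ring] at R3
  have hpy := Real.sin_sq_add_cos_sq (C/2)
  have R4 : (C - A)/2 = -(2*A*C)/Real.pi := by rw [hA, hC]; field_simp; ring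
  have hAne : A ≠ 0 := ne_of_gt hA0
  have hCne : C ≠ 0 := ne_of_gt hC0
  clear_value A C
  have key1 : 2*(Real.sqrt 2-1)*(-4/Real.pi)*(Real.sin ((C-A)/2)/((C-A)/2)) *
      Real.cos ((C+A)/2)*(A/Real.sin A)*(C/Real.sin C) =
        2*(Real.sqrt 2-1)*(Real.sin C-Real.sin A)/(Real.sin A*Real.sin C) := by
    rw [R1, R4]
    field_simp
    ring
  have key2 : Real.sin (C/2)/Real.cos (C/2) = (1 - Real.cos C)/Real.sin C := by
    rw [R3, R2, show 1 - (2*Real.cos (C/2)^2 - 1) = 2*Real.sin (C/2)^2 by linarith]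
    field_simp
  rw [key1, key2]
  field_simp
  ring

theorem stmt6 :
    Tendsto (fun m : ℕ =>
      (4 : ℝ) *
        ((∑ k ∈ Finset.Icc 1 ((4 * m + 1 - 1) / 4),
            (Real.cos ((2 * (k : ℝ) - 1) * Real.pi / (2 * (4 * (m : ℝ) + 1) - 2)) -
              Real.cos ((k : ℝ) * Real.pi / ((4 * (m : ℝ) + 1) + 1)))) +
          ∑ k ∈ Finset.Icc ((4 * m + 1 + 3) / 4) ((4 * m + 1 - 1) / 2),
            (Real.cos ((k : ℝ) * Real.pi / ((4 * (m : ℝ) + 1) + 1)) -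
              Real.cos ((2 * (k : ℝ) - 1) * Real.pi / (2 * (4 * (m : ℝ) + 1) - 2)))))
      atTop (nhds ((8 - 8 * Real.sqrt 2 + 2 * Real.pi) / Real.pi)) := by
  refine Tendsto.congr' ?_ FF_lim
  filter_upwards [eventually_ge_atTop 1] with m hm
  exact FF_eq m hm
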